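/- Theorem 4.1, optimality part: Let Ω = {ω_1, …, ω_n} with Σ_{j=1}^{n} p̄(ω_j) ≥ 1, let f be a gamble such that f(ω_1) ≥ f(ω_2) ≥ ⋯ ≥ f(ω_n), let k be the smallest index such that Σ_{j=1}^{k} p̄(ω_j) ≥ 1, and define p by p(ω_i) = p̄(ω_i) if i < k, p(ω_k) = 1 − Σ_{j=1}^{k−1} p̄(ω_j), and p(ω_i) = 0 if i > k. Then the expectation of f under p equals the upper natural extension of f: Σ_{ω ∈ Ω} f(ω) p(ω) = Ē_{p̄}(f). -/

import Mathlib

/-- The upper natural extension of a gamble `f` with respect to the upper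
probability mass function `pbar`. -/
noncomputable def upperExt {Ω : Type*} [Fintype Ω] [DecidableEq Ω]
    (pbar f : Ω → ℝ) : ℝ :=
  sInf {β : ℝ | ∃ lam : Ω → ℝ, (∀ ω, 0 ≤ lam ω) ∧
    ∀ ω' : Ω, ∑ ω : Ω, lam ω * (pbar ω - (if ω' = ω then (1 : ℝ) else 0)) ≤ β - f ω'}

set_option maxRecDepth 8000 in
/-- Theorem 4.1, optimality part: the expectation of `f` under the probability
mass function `p` constructed by Algorithm 1 equals the upper natural
extension `Ē(f)`. -/
theorem algorithm_p_is_optimal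
    {Ω : Type*} [Fintype Ω] [DecidableEq Ω]
    (n : ℕ) (e : Fin n ≃ Ω)
    (pbar : Ω → ℝ) (hpbar : ∀ ω, 0 ≤ pbar ω ∧ pbar ω ≤ 1)
    (hasl : 1 ≤ ∑ ω : Ω, pbar ω)
    (f : Ω → ℝ)
    (hmono : ∀ i j : Fin n, i ≤ j → f (e j) ≤ f (e i))
    (k : Fin n)
    (hk : 1 ≤ ∑ j ∈ Finset.Iic k, pbar (e j))
    (hkmin : ∀ j : Fin n, j < k → ∑ i ∈ Finset.Iic j, pbar (e i) < 1)
    (p : Ω → ℝ)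
    (hpdef : ∀ i : Fin n, p (e i) =
      if i < k then pbar (e i)
      else if i = k then 1 - ∑ j ∈ Finset.Iio k, pbar (e j)
      else 0) :
    ∑ ω : Ω, f ω * p ω = upperExt pbar f := by
  classical
  set S : ℝ := ∑ j ∈ Finset.Iio k, pbar (e j) with hSdef
  have hIio_filter : Finset.Iio k = Finset.univ.filter (· < k) := by
    ext i; simp
  have hS_lt : S < 1 := by
    rcases Nat.eq_zero_or_pos k.val with h0 | hpos
    · have hempty : Finset.Iio k = ∅ := by
        ext i; simp [Fin.lt_def, h0]
      simp [hSdef, hempty]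
    · have hn : k.val - 1 < n := lt_of_le_of_lt (Nat.sub_le _ _) k.isLt
      have hj := hkmin ⟨k.val - 1, hn⟩ (Fin.lt_def.mpr (Nat.sub_lt hpos Nat.one_pos))
      have heq : Finset.Iic (⟨k.val - 1, hn⟩ : Fin n) = Finset.Iio k := by
        ext i; simp only [Finset.mem_Iic, Finset.mem_Iio, Fin.le_def, Fin.lt_def]; omega
      rwa [heq] at hj
  have hS_nonneg : 0 ≤ S := Finset.sum_nonneg fun j _ => (hpbar (e j)).1
  have hpk : 1 - S ≤ pbar (e k) := by
    have hins : Finset.Iic k = insert k (Finset.Iio k) := (Finset.Iio_insert k).symm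
    rw [hins, Finset.sum_insert (by simp : k ∉ Finset.Iio k)] at hk
    linarith
  -- basic facts about p
  have hp_nonneg : ∀ ω, 0 ≤ p ω := by
    intro ω
    have h := hpdef (e.symm ω)
    rw [e.apply_symm_apply] at h
    rw [h]
    split_ifs with h1 h2
    · exact (hpbar _).1
    · linarith
    · exact le_refl 0
  have hp_le : ∀ ω, p ω ≤ pbar ω := by
    intro ω
    have h := hpdef (e.symm ω)
    rw [e.apply_symm_apply] at h
    rw [h]
    split_ifs with h1 h2
    · exact le_refl _
    · have h3 := hpk; rw [← h2, e.apply_symm_apply] at h3; exact h3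
    · exact (hpbar _).1
  -- sum against p
  have hsum_p : ∀ g : Ω → ℝ, ∑ ω, g ω * p ω
      = (∑ i ∈ Finset.Iio k, g (e i) * pbar (e i)) + g (e k) * (1 - S) := by
    intro g
    rw [← e.sum_comp (fun ω => g ω * p ω)]
    have hterm : ∀ i : Fin n, g (e i) * p (e i)
        = (if i < k then g (e i) * pbar (e i) else 0)
          + (if i = k then g (e k) * (1 - S) else 0) := by
      intro i
      rw [hpdef i]
      rcases lt_trichotomy i k with h | h | h
      · simp [h, ne_of_lt h]
      · simp [h, lt_irrefl]
      · simp [not_lt_of_gt h, (ne_of_gt h)]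
    rw [Finset.sum_congr rfl (fun i _ => hterm i), Finset.sum_add_distrib,
      Finset.sum_ite_eq' Finset.univ k, hIio_filter, ← Finset.sum_filter]
    simp
  have hp1 : ∑ ω, p ω = 1 := by
    have h1 := hsum_p (fun _ => 1)
    simp only [one_mul] at h1
    rw [h1]; ring
  -- the candidate value
  set E : ℝ := ∑ ω, f ω * p ω with hEdef
  have hE : E = (∑ i ∈ Finset.Iio k, f (e i) * pbar (e i)) + f (e k) * (1 - S) :=
    hsum_p f
  -- constraint sum identity
  have hsum_con : ∀ (l : Ω → ℝ) (ω' : Ω),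
      ∑ ω, l ω * (pbar ω - if ω' = ω then (1:ℝ) else 0)
        = (∑ ω, l ω * pbar ω) - l ω' := by
    intro l ω'
    have hterm : ∀ ω, l ω * (pbar ω - if ω' = ω then (1:ℝ) else 0)
        = l ω * pbar ω - (if ω' = ω then l ω else 0) := by
      intro ω; split_ifs <;> ring
    rw [Finset.sum_congr rfl fun ω _ => hterm ω, Finset.sum_sub_distrib,
      Finset.sum_ite_eq Finset.univ ω' l]
    simp
  -- the witness lambda
  set lam : Ω → ℝ := fun ω => if e.symm ω < k then f ω - f (e k) else 0 with hlamdef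
  have hlam_apply : ∀ i : Fin n, lam (e i) =
      if i < k then f (e i) - f (e k) else 0 := by
    intro i; simp [hlamdef]
  have hlam_nonneg : ∀ ω, 0 ≤ lam ω := by
    intro ω
    obtain ⟨i, rfl⟩ := e.surjective ω
    rw [hlam_apply]
    split_ifs with h
    · have := hmono i k (le_of_lt h); linarith
    · exact le_refl 0
  have hT : ∑ ω, lam ω * pbar ω
      = (∑ i ∈ Finset.Iio k, f (e i) * pbar (e i)) - f (e k) * S := by
    rw [← e.sum_comp (fun ω => lam ω * pbar ω)]
    have hterm : ∀ i : Fin n, lam (e i) * pbar (e i)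
        = if i < k then (f (e i) * pbar (e i) - f (e k) * pbar (e i)) else 0 := by
      intro i; rw [hlam_apply]; split_ifs <;> ring
    rw [Finset.sum_congr rfl fun i _ => hterm i, hIio_filter, ← Finset.sum_filter,
      Finset.sum_sub_distrib, ← Finset.mul_sum, ← hIio_filter]
  -- membership of E in the set
  have hmem : E ∈ {β : ℝ | ∃ l : Ω → ℝ, (∀ ω, 0 ≤ l ω) ∧
      ∀ ω' : Ω, ∑ ω : Ω, l ω * (pbar ω - (if ω' = ω then (1 : ℝ) else 0)) ≤ β - f ω'} := by
    refine ⟨lam, hlam_nonneg, fun ω' => ?_⟩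
    rw [hsum_con lam ω', hT]
    obtain ⟨i, rfl⟩ := e.surjective ω'
    rw [hlam_apply]
    split_ifs with h
    · rw [hE]; ring_nf; linarith
    · have := hmono k i (not_lt.mp h)
      rw [hE]; ring_nf; linarith
  -- lower bound
  have hlb : ∀ β ∈ {β : ℝ | ∃ l : Ω → ℝ, (∀ ω, 0 ≤ l ω) ∧
      ∀ ω' : Ω, ∑ ω : Ω, l ω * (pbar ω - (if ω' = ω then (1 : ℝ) else 0)) ≤ β - f ω'},
      E ≤ β := by
    rintro β ⟨l, hl0, hcon⟩
    set T : ℝ := ∑ ω, l ω * pbar ω with hTdef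
    have hstep : ∀ ω, f ω * p ω ≤ (β - T + l ω) * p ω := by
      intro ω
      have h := hcon ω
      rw [hsum_con l ω] at h
      exact mul_le_mul_of_nonneg_right (by linarith) (hp_nonneg ω)
    have hsum1 : E ≤ ∑ ω, (β - T + l ω) * p ω :=
      Finset.sum_le_sum fun ω _ => hstep ω
    have hsplit : ∑ ω, (β - T + l ω) * p ω
        = (β - T) * (∑ ω, p ω) + ∑ ω, l ω * p ω := by
      rw [Finset.mul_sum, ← Finset.sum_add_distrib]
      exact Finset.sum_congr rfl fun ω _ => by ring
    have hlp : ∑ ω, l ω * p ω ≤ T :=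
      Finset.sum_le_sum fun ω _ => mul_le_mul_of_nonneg_left (hp_le ω) (hl0 ω)
    rw [hsplit, hp1] at hsum1
    linarith
  unfold upperExt
  exact le_antisymm (le_csInf ⟨E, hmem⟩ hlb) (csInf_le ⟨E, hlb⟩ hmem)
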